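/- (Virtual training criterion.) Let α > 0 and β > 0, and define for an extractor E : 𝒳 → ℱ, predictor P, discriminator D and classifier C the value function V(E,P,D,C) = L_P(P,E) − α·L_D(D,E,P) − β·L_C(C,E,P), where L_D and L_C are the discriminator and classifier losses on the composite feature Φ_P(x) = (E(x), P(E(x))). Then the minimax optimization collapses to the virtual value function: inf over extractors E : 𝒳 → ℱ and predictors P of the sup over discriminators D and classifiers C of V(E,P,D,C) equals inf over extractors E : 𝒳 → ℱ of 𝒱(E) = H(Y|E(X)) − α·H(Z|(E(X),π_E(X))) − β·H(V|(E(X),π_E(X))), where infima and suprema are taken in the extended reals. -/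

import Mathlib

open scoped BigOperators

/-- Marginal of a joint pmf on the first coordinate: `q_X(x) = ∑ w q(x,w)`. -/
noncomputable def margX {X W : Type*} [Fintype W] (q : X × W → ℝ) (x : X) : ℝ :=
  ∑ w, q (x, w)

open Classical in
/-- `Pr[f = a, W = w] = ∑_{x : f x = a} q(x,w)`. -/
noncomputable def jointPr {X W A : Type*} [Fintype X] (q : X × W → ℝ)
    (f : X → A) (a : A) (w : W) : ℝ :=
  ∑ x ∈ Finset.univ.filter (fun x => f x = a), q (x, w)

open Classical in
/-- `Pr[f = a] = ∑_{x : f x = a} q_X(x)`. -/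
noncomputable def featPr {X W A : Type*} [Fintype X] [Fintype W] (q : X × W → ℝ)
    (f : X → A) (a : A) : ℝ :=
  ∑ x ∈ Finset.univ.filter (fun x => f x = a), margX q x

open Classical in
/-- Conditional entropy `H(W | f(X))`, natural logarithm, with the convention that
summands with `Pr[f=a, W=w] = 0` contribute `0` (automatic since `-0 * log _ = 0`). -/
noncomputable def condEnt {X W A : Type*} [Fintype X] [Fintype W] (q : X × W → ℝ)
    (f : X → A) : ℝ :=
  ∑ a ∈ Finset.univ.image f, ∑ w,
    -(jointPr q f a w) * Real.log (jointPr q f a w / featPr q f a)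

/-- `-log t` valued in `(-∞, ∞]`, with the convention `-log 0 = +∞`. -/
noncomputable def negLog (t : ℝ) : EReal := if t = 0 then ⊤ else ((-(Real.log t) : ℝ) : EReal)

/-- Cross-entropy loss `∑_{x,w} q(x,w) · (-log P(Φ(x))(w))`, valued in `(-∞, ∞]`. -/
noncomputable def condLoss {X W G : Type*} [Fintype X] [Fintype W] (q : X × W → ℝ)
    (Φ : X → G) (P : G → W → ℝ) : EReal :=
  ∑ x, ∑ w, (q (x, w) : EReal) * negLog (P (Φ x) w)

/-- A conditional probability mass function on labels `W` with feature space `G`. -/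
def IsCondPMF {G W : Type*} [Fintype W] (P : G → W → ℝ) : Prop :=
  (∀ g w, 0 ≤ P g w) ∧ ∀ g, ∑ w, P g w = 1

open Classical in
/-- The posterior predictor: `Pr[Φ=g, W=w]/Pr[Φ=g]` on features of positive probability
in the image of `Φ`, and the uniform distribution on `W` otherwise. -/
noncomputable def posteriorPred {X W G : Type*} [Fintype X] [Fintype W] (q : X × W → ℝ)
    (Φ : X → G) (g : G) (w : W) : ℝ :=
  if g ∈ Set.range Φ ∧ 0 < featPr q Φ g then jointPr q Φ g w / featPr q Φ g
  else 1 / Fintype.card W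

/-- The posterior map `π(x)(w) = q(x,w)/q_X(x)`. -/
noncomputable def postMap {X W : Type*} [Fintype W] (q : X × W → ℝ) (x : X) : W → ℝ :=
  fun w => q (x, w) / margX q x

/-- Two-variable marginal `q_{XY}` of a pmf on `X × Y × Z × V`. -/
noncomputable def qXY {X Y Z V : Type*} [Fintype Z] [Fintype V]
    (q : X × Y × Z × V → ℝ) : X × Y → ℝ :=
  fun p => ∑ z, ∑ v, q (p.1, p.2, z, v)

/-- Two-variable marginal `q_{XZ}` of a pmf on `X × Y × Z × V`. -/
noncomputable def qXZ {X Y Z V : Type*} [Fintype Y] [Fintype V]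
    (q : X × Y × Z × V → ℝ) : X × Z → ℝ :=
  fun p => ∑ y, ∑ v, q (p.1, y, p.2, v)

/-- Two-variable marginal `q_{XV}` of a pmf on `X × Y × Z × V`. -/
noncomputable def qXV {X Y Z V : Type*} [Fintype Y] [Fintype Z]
    (q : X × Y × Z × V → ℝ) : X × V → ℝ :=
  fun p => ∑ y, ∑ z, q (p.1, y, z, p.2)

/-- The posterior feature of an extractor `E`:
`π_E(x)(y) = Pr[E = E(x), Y = y] / Pr[E = E(x)]`. -/
noncomputable def postFeat {X Y F : Type*} [Fintype X] [Fintype Y] (qxy : X × Y → ℝ)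
    (E : X → F) (x : X) : Y → ℝ :=
  fun y => jointPr qxy E (E x) y / featPr qxy E (E x)

/-- The virtual value function
`𝒱(E) = H(Y|E(X)) - α·H(Z|(E(X),π_E(X))) - β·H(V|(E(X),π_E(X)))`. -/
noncomputable def virtVal {X Y Z V F : Type*}
    [Fintype X] [Fintype Y] [Fintype Z] [Fintype V]
    (α β : ℝ) (q : X × Y × Z × V → ℝ) (E : X → F) : ℝ :=
  condEnt (qXY q) E
    - α * condEnt (qXZ q) (fun x => (E x, postFeat (qXY q) E x))
    - β * condEnt (qXV q) (fun x => (E x, postFeat (qXY q) E x))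


set_option linter.unusedSectionVars false
set_option linter.unusedVariables false
open Classical

section Aux
variable {X W G A B : Type*} [Fintype X] [Fintype W]

lemma coe_sum {ι : Type*} (s : Finset ι) (f : ι → ℝ) :
    ((∑ i ∈ s, f i : ℝ) : EReal) = ∑ i ∈ s, ((f i : ℝ) : EReal) := by
  induction s using Finset.cons_induction with
  | empty => simp
  | cons a s ha ih => rw [Finset.sum_cons, Finset.sum_cons, EReal.coe_add, ih]

variable (q : X × W → ℝ)

lemma jointPr_nonneg (hq0 : ∀ p, 0 ≤ q p) (f : X → A) (a : A) (w : W) :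
    0 ≤ jointPr q f a w :=
  Finset.sum_nonneg fun x _ => hq0 _

lemma margX_nonneg (hq0 : ∀ p, 0 ≤ q p) (x : X) : 0 ≤ margX q x :=
  Finset.sum_nonneg fun w _ => hq0 _

lemma featPr_eq_sum_joint (f : X → A) (a : A) :
    featPr q f a = ∑ w, jointPr q f a w := by
  unfold featPr jointPr margX
  rw [Finset.sum_comm]

lemma featPr_nonneg (hq0 : ∀ p, 0 ≤ q p) (f : X → A) (a : A) : 0 ≤ featPr q f a :=
  Finset.sum_nonneg fun x _ => margX_nonneg q hq0 x

lemma q_le_jointPr (hq0 : ∀ p, 0 ≤ q p) (f : X → A) (x : X) (w : W) :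
    q (x, w) ≤ jointPr q f (f x) w := by
  unfold jointPr
  exact Finset.single_le_sum (f := fun x' => q (x', w)) (fun x' _ => hq0 _)
    (by simp)

lemma featPr_pos (hq0 : ∀ p, 0 ≤ q p) (hm : ∀ x, 0 < margX q x) (f : X → A) (x : X) :
    0 < featPr q f (f x) := by
  unfold featPr
  exact lt_of_lt_of_le (hm x)
    (Finset.single_le_sum (f := fun x' => margX q x') (fun x' _ => margX_nonneg q hq0 x')
      (by simp))

lemma sum_fiber (f : X → A) (g : A → W → ℝ) :
    ∑ x, ∑ w, q (x, w) * g (f x) w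
      = ∑ a ∈ Finset.univ.image f, ∑ w, jointPr q f a w * g a w := by
  rw [← Finset.sum_fiberwise_of_maps_to (g := f)
    (fun x _ => Finset.mem_image_of_mem f (Finset.mem_univ x))
    (f := fun x => ∑ w, q (x, w) * g (f x) w)]
  refine Finset.sum_congr rfl fun a ha => ?_
  rw [Finset.sum_comm]
  refine Finset.sum_congr rfl fun w _ => ?_
  rw [jointPr, Finset.sum_mul]
  refine Finset.sum_congr rfl fun x hx => ?_
  rw [(Finset.mem_filter.1 hx).2]

end Aux

section Gibbs
variable {X W G A : Type*} [Fintype X] [Fintype W]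

lemma gibbs_group (J r : W → ℝ) (hJ : ∀ w, 0 ≤ J w) (hr : ∀ w, 0 ≤ r w)
    (hr1 : ∑ w, r w ≤ 1) (hpos : ∀ w, 0 < J w → 0 < r w) :
    ∑ w, -(J w) * Real.log (J w / ∑ w', J w') ≤ ∑ w, J w * (-Real.log (r w)) := by
  set P := ∑ w', J w' with hP
  rw [← sub_nonneg, ← Finset.sum_sub_distrib]
  have hterm : ∀ w ∈ (Finset.univ : Finset W),
      (if 0 < J w then J w - P * r w else 0)
        ≤ J w * -Real.log (r w) - -(J w) * Real.log (J w / P) := by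
    intro w _
    by_cases h : 0 < J w
    · have hrw := hpos w h
      have hPpos : 0 < P := lt_of_lt_of_le h
        (Finset.single_le_sum (fun w' _ => hJ w') (Finset.mem_univ w))
      have hlog : Real.log (P * r w / J w) ≤ P * r w / J w - 1 :=
        Real.log_le_sub_one_of_pos (by positivity)
      have h3 : J w * Real.log (P * r w / J w) ≤ P * r w - J w := by
        calc J w * Real.log (P * r w / J w) ≤ J w * (P * r w / J w - 1) :=
              mul_le_mul_of_nonneg_left hlog h.le
          _ = P * r w - J w := by field_simp
      have e1 : Real.log (P * r w / J w) = Real.log P + Real.log (r w) - Real.log (J w) := by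
        rw [Real.log_div (by positivity) h.ne', Real.log_mul hPpos.ne' hrw.ne']
      have e2 : Real.log (J w / P) = Real.log (J w) - Real.log P :=
        Real.log_div h.ne' hPpos.ne'
      rw [if_pos h, e2]
      nlinarith [h3, e1]
    · have h0 : J w = 0 := le_antisymm (not_lt.1 h) (hJ w)
      rw [if_neg h, h0]; simp
  refine le_trans ?_ (Finset.sum_le_sum hterm)
  rw [Finset.sum_ite, Finset.sum_const_zero, add_zero, Finset.sum_sub_distrib,
    ← Finset.mul_sum]
  have hSJ : ∑ w ∈ Finset.univ.filter (fun w => 0 < J w), J w = P := by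
    rw [hP]
    exact Finset.sum_filter_of_ne fun w _ hw => lt_of_le_of_ne (hJ w) (Ne.symm hw)
  have hSr : ∑ w ∈ Finset.univ.filter (fun w => 0 < J w), r w ≤ 1 :=
    le_trans (Finset.sum_le_sum_of_subset_of_nonneg (Finset.filter_subset _ _)
      (fun w _ _ => hr w)) hr1
  have hP0 : 0 ≤ P := Finset.sum_nonneg fun w _ => hJ w
  rw [hSJ]
  nlinarith [mul_le_mul_of_nonneg_left hSr hP0]

variable (q : X × W → ℝ)

lemma condLoss_eq_coe (hq0 : ∀ p, 0 ≤ q p) (Φ : X → G) (D : G → W → ℝ)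
    (hD : ∀ x w, 0 < q (x, w) → D (Φ x) w ≠ 0) :
    condLoss q Φ D = ((∑ x, ∑ w, q (x, w) * (-Real.log (D (Φ x) w)) : ℝ) : EReal) := by
  unfold condLoss
  rw [coe_sum]
  refine Finset.sum_congr rfl fun x _ => ?_
  rw [coe_sum]
  refine Finset.sum_congr rfl fun w _ => ?_
  rcases eq_or_lt_of_le (hq0 (x, w)) with h | h
  · rw [← h]; simp
  · rw [negLog, if_neg (hD x w h)]
    exact (EReal.coe_mul _ _).symm

lemma condEnt_le_realLoss (hq0 : ∀ p, 0 ≤ q p) (Φ : X → G) (D : G → W → ℝ)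
    (hD0 : ∀ g w, 0 ≤ D g w) (hD1 : ∀ g, ∑ w, D g w = 1)
    (hDpos : ∀ x w, 0 < q (x, w) → D (Φ x) w ≠ 0) :
    condEnt q Φ ≤ ∑ x, ∑ w, q (x, w) * (-Real.log (D (Φ x) w)) := by
  rw [sum_fiber q Φ (fun a w => -Real.log (D a w))]
  unfold condEnt
  refine Finset.sum_le_sum fun a ha => ?_
  rw [featPr_eq_sum_joint]
  refine gibbs_group _ (D a) (jointPr_nonneg q hq0 Φ a) (hD0 a) (le_of_eq (hD1 a))
    fun w hw => ?_
  have : ∃ x ∈ Finset.univ.filter (fun x => Φ x = a), 0 < q (x, w) := by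
    by_contra hc
    push_neg at hc
    have : jointPr q Φ a w ≤ 0 := Finset.sum_nonpos fun x hx => hc x hx
    exact absurd hw (not_lt.2 this)
  obtain ⟨x, hx, hqx⟩ := this
  have hfa : Φ x = a := (Finset.mem_filter.1 hx).2
  have := hDpos x w hqx
  rw [hfa] at this
  exact lt_of_le_of_ne (hD0 a w) (Ne.symm this)

end Gibbs

section Post
variable {X W G A : Type*} [Fintype X] [Fintype W] (q : X × W → ℝ)

lemma posteriorPred_isCondPMF [Nonempty W] (hq0 : ∀ p, 0 ≤ q p) (Φ : X → G) :
    IsCondPMF (posteriorPred q Φ) := by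
  constructor
  · intro g w
    unfold posteriorPred
    split_ifs with h
    · exact div_nonneg (jointPr_nonneg q hq0 Φ g w) (featPr_nonneg q hq0 Φ g)
    · exact div_nonneg zero_le_one (Nat.cast_nonneg _)
  · intro g
    unfold posteriorPred
    by_cases h : g ∈ Set.range Φ ∧ 0 < featPr q Φ g
    · simp only [if_pos h]
      rw [← Finset.sum_div, ← featPr_eq_sum_joint, div_self h.2.ne']
    · simp only [if_neg h]
      rw [Finset.sum_const, nsmul_eq_mul, Finset.card_univ]
      rw [mul_one_div, div_self]
      exact_mod_cast Fintype.card_ne_zero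

lemma condLoss_posterior (hq0 : ∀ p, 0 ≤ q p) (hm : ∀ x, 0 < margX q x) (Φ : X → G) :
    condLoss q Φ (posteriorPred q Φ) = ((condEnt q Φ : ℝ) : EReal) := by
  have hcond : ∀ x : X, (Φ x ∈ Set.range Φ ∧ 0 < featPr q Φ (Φ x)) :=
    fun x => ⟨Set.mem_range_self x, featPr_pos q hq0 hm Φ x⟩
  rw [condLoss_eq_coe q hq0 Φ _ ?hpos]
  case hpos =>
    intro x w hq
    rw [posteriorPred, if_pos (hcond x)]
    have h1 : 0 < jointPr q Φ (Φ x) w := lt_of_lt_of_le hq (q_le_jointPr q hq0 Φ x w)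
    have h2 : 0 < featPr q Φ (Φ x) := (hcond x).2
    positivity
  congr 1
  have : ∀ x w, q (x, w) * -Real.log (posteriorPred q Φ (Φ x) w)
      = q (x, w) * (fun a w => -Real.log (jointPr q Φ a w / featPr q Φ a)) (Φ x) w := by
    intro x w
    rw [posteriorPred, if_pos (hcond x)]
  simp only [this]
  have hg := sum_fiber q Φ (fun a w => -Real.log (jointPr q Φ a w / featPr q Φ a))
  rw [hg]
  unfold condEnt
  refine Finset.sum_congr rfl fun a _ => Finset.sum_congr rfl fun w _ => by ring

lemma negLog_nonneg {t : ℝ} (h0 : 0 ≤ t) (h1 : t ≤ 1) : 0 ≤ negLog t := by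
  unfold negLog
  split_ifs with h
  · exact le_top
  · have : Real.log t ≤ 0 := Real.log_nonpos h0 h1
    exact_mod_cast neg_nonneg.2 this

end Post

section ERealLayer
variable {X W G A B : Type*} [Fintype X] [Fintype W]

lemma sum_eq_top {ι : Type*} {s : Finset ι} {f : ι → EReal}
    (h0 : ∀ i ∈ s, 0 ≤ f i) {i₀ : ι} (hi₀ : i₀ ∈ s) (htop : f i₀ = ⊤) :
    ∑ i ∈ s, f i = ⊤ := by
  rw [← Finset.add_sum_erase s f hi₀, htop]
  refine EReal.top_add_of_ne_bot ?_
  have : (0 : EReal) ≤ ∑ i ∈ s.erase i₀, f i :=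
    Finset.sum_nonneg fun i hi => h0 i (Finset.mem_of_mem_erase hi)
  exact fun hb => by simp [hb] at this

variable (q : X × W → ℝ)

lemma condEnt_le_condLoss (hq0 : ∀ p, 0 ≤ q p) (Φ : X → G) (D : G → W → ℝ)
    (hD : IsCondPMF D) :
    ((condEnt q Φ : ℝ) : EReal) ≤ condLoss q Φ D := by
  have hDle1 : ∀ g w, D g w ≤ 1 := by
    intro g w
    rw [← hD.2 g]
    exact Finset.single_le_sum (fun w' _ => hD.1 g w') (Finset.mem_univ w)
  by_cases hpos : ∀ x w, 0 < q (x, w) → D (Φ x) w ≠ 0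
  · rw [condLoss_eq_coe q hq0 Φ D hpos]
    exact_mod_cast condEnt_le_realLoss q hq0 Φ D hD.1 hD.2 hpos
  · push_neg at hpos
    obtain ⟨x₀, w₀, hq, hD0⟩ := hpos
    have hterm : ∀ (x : X) (w : W), (0 : EReal) ≤ (q (x, w) : EReal) * negLog (D (Φ x) w) :=
      fun x w => mul_nonneg (by exact_mod_cast hq0 (x, w))
        (negLog_nonneg (hD.1 _ _) (hDle1 _ _))
    have htop : condLoss q Φ D = ⊤ := by
      unfold condLoss
      refine sum_eq_top (fun x _ => Finset.sum_nonneg fun w _ => hterm x w)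
        (Finset.mem_univ x₀) ?_
      refine sum_eq_top (fun w _ => hterm x₀ w) (Finset.mem_univ w₀) ?_
      rw [negLog, if_pos hD0]
      exact EReal.coe_mul_top_of_pos hq
    rw [htop]
    exact le_top

lemma sup_sub_loss [Nonempty W] (A : EReal) (c : ℝ) (hc : 0 < c)
    (hq0 : ∀ p, 0 ≤ q p) (hm : ∀ x, 0 < margX q x) (Φ : X → G) :
    (⨆ (D : G → W → ℝ), ⨆ (_ : IsCondPMF D), (A - (c : EReal) * condLoss q Φ D))
      = A - (c : EReal) * ((condEnt q Φ : ℝ) : EReal) := by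
  apply le_antisymm
  · refine iSup_le fun D => iSup_le fun hD => ?_
    have h2 : (c : EReal) * ((condEnt q Φ : ℝ) : EReal) ≤ (c : EReal) * condLoss q Φ D :=
      mul_le_mul_of_nonneg_left (condEnt_le_condLoss q hq0 Φ D hD)
        (by exact_mod_cast hc.le)
    exact EReal.sub_le_sub le_rfl h2
  · have hpmf := posteriorPred_isCondPMF q hq0 Φ
    have := le_iSup₂ (f := fun (D : G → W → ℝ) (_ : IsCondPMF D) =>
      A - (c : EReal) * condLoss q Φ D) (posteriorPred q Φ) hpmf
    rwa [condLoss_posterior q hq0 hm Φ] at this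

lemma inf_loss_sub [Nonempty W] (k₁ k₂ : EReal)
    (hq0 : ∀ p, 0 ≤ q p) (hm : ∀ x, 0 < margX q x) (E : X → G) :
    (⨅ (P : G → W → ℝ), ⨅ (_ : IsCondPMF P), (condLoss q E P - k₁ - k₂))
      = ((condEnt q E : ℝ) : EReal) - k₁ - k₂ := by
  apply le_antisymm
  · have hpmf := posteriorPred_isCondPMF q hq0 E
    have := iInf₂_le (f := fun (P : G → W → ℝ) (_ : IsCondPMF P) =>
      condLoss q E P - k₁ - k₂) (posteriorPred q E) hpmf
    rwa [condLoss_posterior q hq0 hm E] at this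
  · refine le_iInf fun P => le_iInf fun hP => ?_
    exact EReal.sub_le_sub (EReal.sub_le_sub (condEnt_le_condLoss q hq0 E P hP) le_rfl) le_rfl

lemma condEnt_comp (E : X → A) (g : A → B) (Φ : X → B)
    (hΦ : ∀ x, Φ x = g (E x)) (hg : Function.Injective g) :
    condEnt q Φ = condEnt q E := by
  have hΦ' : Φ = fun x => g (E x) := funext hΦ
  subst hΦ'
  have hjoint : ∀ (a : A) (w : W), jointPr q (fun x => g (E x)) (g a) w = jointPr q E a w := by
    intro a w
    unfold jointPr
    refine Finset.sum_congr ?_ fun _ _ => rfl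
    ext x
    simp [hg.eq_iff]
  have hfeat : ∀ a : A, featPr q (fun x => g (E x)) (g a) = featPr q E a := by
    intro a
    unfold featPr
    refine Finset.sum_congr ?_ fun _ _ => rfl
    ext x
    simp [hg.eq_iff]
  unfold condEnt
  have himg : Finset.univ.image (fun x => g (E x)) = (Finset.univ.image E).image g := by
    rw [Finset.image_image]
    rfl
  rw [himg, Finset.sum_image (fun a _ b _ h => hg h)]
  exact Finset.sum_congr rfl fun a _ => Finset.sum_congr rfl fun w _ => by
    rw [hjoint a w, hfeat a]

lemma sub_sub_comm (a b c : EReal) : a - b - c = a - c - b := by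
  rw [sub_eq_add_neg, sub_eq_add_neg, sub_eq_add_neg, sub_eq_add_neg, add_right_comm]

end ERealLayer

section Marg
variable {X Y Z V : Type*} [Fintype Y] [Fintype Z] [Fintype V] (q : X × Y × Z × V → ℝ)

lemma margX_qXZ_eq (x : X) : margX (qXZ q) x = margX (qXY q) x := by
  unfold margX qXZ qXY
  rw [Finset.sum_comm]

lemma margX_qXV_eq (x : X) : margX (qXV q) x = margX (qXY q) x := by
  unfold margX qXV qXY
  rw [Finset.sum_comm]
  exact Finset.sum_congr rfl fun y _ => Finset.sum_comm

end Marg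

/-- Virtual training criterion: the minimax optimization of the value
function `V(E,P,D,C) = L_P - α·L_D - β·L_C` collapses to minimizing the virtual value
function `𝒱(E) = H(Y|E(X)) - α·H(Z|(E(X),π_E(X))) - β·H(V|(E(X),π_E(X)))`. -/
theorem statement5 {X Y Z V F : Type*}
    [Fintype X] [Nonempty X] [Fintype Y] [Nonempty Y]
    [Fintype Z] [Nonempty Z] [Fintype V] [Nonempty V]
    (α β : ℝ) (hα : 0 < α) (hβ : 0 < β)
    (q : X × Y × Z × V → ℝ) (hq0 : ∀ p, 0 ≤ q p) (hq1 : ∑ p, q p = 1)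
    (hqX : ∀ x, 0 < margX (qXY q) x) :
    (⨅ (E : X → F), ⨅ (P : F → Y → ℝ), ⨅ (_ : IsCondPMF P),
      ⨆ (D : F × (Y → ℝ) → Z → ℝ), ⨆ (_ : IsCondPMF D),
      ⨆ (C : F × (Y → ℝ) → V → ℝ), ⨆ (_ : IsCondPMF C),
        condLoss (qXY q) E P
          - (α : EReal) * condLoss (qXZ q) (fun x => (E x, P (E x))) D
          - (β : EReal) * condLoss (qXV q) (fun x => (E x, P (E x))) C)
    = ⨅ (E : X → F), ((virtVal α β q E : ℝ) : EReal) := by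
  have hqY0 : ∀ p, 0 ≤ qXY q p :=
    fun p => Finset.sum_nonneg fun z _ => Finset.sum_nonneg fun v _ => hq0 _
  have hqZ0 : ∀ p, 0 ≤ qXZ q p :=
    fun p => Finset.sum_nonneg fun y _ => Finset.sum_nonneg fun v _ => hq0 _
  have hqV0 : ∀ p, 0 ≤ qXV q p :=
    fun p => Finset.sum_nonneg fun y _ => Finset.sum_nonneg fun z _ => hq0 _
  have hmZ : ∀ x, 0 < margX (qXZ q) x := fun x => by rw [margX_qXZ_eq]; exact hqX x
  have hmV : ∀ x, 0 < margX (qXV q) x := fun x => by rw [margX_qXV_eq]; exact hqX x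
  refine iInf_congr fun E => ?_
  set HZ : ℝ := condEnt (qXZ q) E with hHZ
  set HV : ℝ := condEnt (qXV q) E with hHV
  have hstep : ∀ P : F → Y → ℝ,
      (⨆ (D : F × (Y → ℝ) → Z → ℝ), ⨆ (_ : IsCondPMF D),
       ⨆ (C : F × (Y → ℝ) → V → ℝ), ⨆ (_ : IsCondPMF C),
        condLoss (qXY q) E P
          - (α : EReal) * condLoss (qXZ q) (fun x => (E x, P (E x))) D
          - (β : EReal) * condLoss (qXV q) (fun x => (E x, P (E x))) C)
      = condLoss (qXY q) E P - (α : EReal) * ((HZ : ℝ) : EReal)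
          - (β : EReal) * ((HV : ℝ) : EReal) := by
    intro P
    have hinj : Function.Injective (fun f : F => (f, P f)) :=
      fun a b h => congrArg Prod.fst h
    have hZc : condEnt (qXZ q) (fun x => (E x, P (E x))) = HZ :=
      condEnt_comp (qXZ q) E (fun f => (f, P f)) _ (fun x => rfl) hinj
    have hVc : condEnt (qXV q) (fun x => (E x, P (E x))) = HV :=
      condEnt_comp (qXV q) E (fun f => (f, P f)) _ (fun x => rfl) hinj
    calc
      _ = ⨆ (D : F × (Y → ℝ) → Z → ℝ), ⨆ (_ : IsCondPMF D),
            ((condLoss (qXY q) E P - (β : EReal) * ((HV : ℝ) : EReal))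
              - (α : EReal) * condLoss (qXZ q) (fun x => (E x, P (E x))) D) := by
          refine iSup_congr fun D => iSup_congr fun _ => ?_
          rw [sup_sub_loss (qXV q) _ β hβ hqV0 hmV (fun x => (E x, P (E x))), hVc,
            sub_sub_comm]
      _ = (condLoss (qXY q) E P - (β : EReal) * ((HV : ℝ) : EReal))
            - (α : EReal) * ((HZ : ℝ) : EReal) := by
          rw [sup_sub_loss (qXZ q) _ α hα hqZ0 hmZ (fun x => (E x, P (E x))), hZc]
      _ = _ := sub_sub_comm _ _ _
  calc
    _ = ⨅ (P : F → Y → ℝ), ⨅ (_ : IsCondPMF P),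
          (condLoss (qXY q) E P - (α : EReal) * ((HZ : ℝ) : EReal)
            - (β : EReal) * ((HV : ℝ) : EReal)) :=
        iInf_congr fun P => iInf_congr fun _ => hstep P
    _ = ((condEnt (qXY q) E : ℝ) : EReal) - (α : EReal) * ((HZ : ℝ) : EReal)
          - (β : EReal) * ((HV : ℝ) : EReal) :=
        inf_loss_sub (qXY q) _ _ hqY0 hqX E
    _ = ((virtVal α β q E : ℝ) : EReal) := by
        have hinj : Function.Injective
            (fun f : F => (f, fun y => jointPr (qXY q) E f y / featPr (qXY q) E f)) :=
          fun a b h => congrArg Prod.fst h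
        have hZc : condEnt (qXZ q) (fun x => (E x, postFeat (qXY q) E x)) = HZ :=
          condEnt_comp (qXZ q) E _ _ (fun x => rfl) hinj
        have hVc : condEnt (qXV q) (fun x => (E x, postFeat (qXY q) E x)) = HV :=
          condEnt_comp (qXV q) E _ _ (fun x => rfl) hinj
        rw [virtVal, hZc, hVc]
        push_cast
        rfl
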